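/- Let a > 0 and u(x,t) = exp(a·x + a²t) on ℝ × ℝ. For the cube Q = [1,3] × [1,2] with A = sup_Q u, there is no universal constant C (independent of a) such that u_{xx}(2,2)/u(2,2) ≤ C (1 + log(A/u(2,2))); i.e., the ratio [u_{xx}(2,2)/u(2,2)] / (1 + log(A/u(2,2))) = a²/(1+a) tends to infinity as a → ∞. -/
import Mathlib


open Filter

lemma aux_deriv (a c : ℝ) :
    deriv (deriv (fun y : ℝ => Real.exp (a * y + c))) 2 = a ^ 2 * Real.exp (a * 2 + c) := by
  have h1 : ∀ x : ℝ, HasDerivAt (fun y : ℝ => Real.exp (a * y + c))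
      (Real.exp (a * x + c) * a) x := by
    intro x
    simpa using (((hasDerivAt_id x).const_mul a).add_const c).exp
  have hd1 : deriv (fun y : ℝ => Real.exp (a * y + c))
      = fun x => Real.exp (a * x + c) * a := funext fun x => (h1 x).deriv
  rw [hd1]
  have h2 : HasDerivAt (fun x : ℝ => Real.exp (a * x + c) * a)
      (Real.exp (a * 2 + c) * a * a) 2 := (h1 2).mul_const a
  rw [h2.deriv]; ring

lemma aux_sup (a : ℝ) (ha : 0 < a) :
    sSup ((fun p : ℝ × ℝ => Real.exp (a * p.1 + a ^ 2 * p.2)) ''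
      (Set.Icc 1 3 ×ˢ Set.Icc (1:ℝ) 2)) = Real.exp (a * 3 + a ^ 2 * 2) := by
  apply IsGreatest.csSup_eq
  constructor
  · exact ⟨(3, 2), Set.mk_mem_prod (by norm_num) (by norm_num), rfl⟩
  · rintro y ⟨⟨x, t⟩, ⟨⟨hx1, hx3⟩, ⟨ht1, ht2⟩⟩, rfl⟩
    apply Real.exp_le_exp.2
    have ha2 : (0:ℝ) ≤ a ^ 2 := sq_nonneg a
    nlinarith

lemma aux_ratio (a : ℝ) (ha : 0 < a)
    (u : ℝ → ℝ → ℝ → ℝ) (hu : ∀ a x t, u a x t = Real.exp (a * x + a ^ 2 * t))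
    (A : ℝ → ℝ)
    (hA : ∀ a, A a = sSup ((fun p : ℝ × ℝ => u a p.1 p.2) '' (Set.Icc 1 3 ×ˢ Set.Icc 1 2))) :
    deriv (deriv (fun y => u a y 2)) 2 / u a 2 2 = a ^ 2 ∧
    Real.log (A a / u a 2 2) = a := by
  have hfun : (fun y => u a y 2) = fun y : ℝ => Real.exp (a * y + a ^ 2 * 2) := by
    funext y; rw [hu]
  have hu22 : u a 2 2 = Real.exp (a * 2 + a ^ 2 * 2) := hu a 2 2
  have hApos : A a = Real.exp (a * 3 + a ^ 2 * 2) := by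
    rw [hA]
    have : (fun p : ℝ × ℝ => u a p.1 p.2)
        = fun p : ℝ × ℝ => Real.exp (a * p.1 + a ^ 2 * p.2) := by
      funext p; rw [hu]
    rw [this, aux_sup a ha]
  constructor
  · rw [hfun, aux_deriv, hu22]
    field_simp
  · rw [hApos, hu22, ← Real.exp_sub, Real.log_exp]
    ring

/-- Sharpness of the local Hessian estimate: for `u(x,t) = exp(a x + a² t)` on
`Q = [1,3]×[1,2]` with `A = sup_Q u`, there is no universal constant `C`
(independent of `a > 0`) with `u_{xx}(2,2)/u(2,2) ≤ C(1 + log(A/u(2,2)))`;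
indeed the ratio equals `a²/(1+a) → ∞` as `a → ∞`. -/
theorem stmt_18
    (u : ℝ → ℝ → ℝ → ℝ) (hu : ∀ a x t, u a x t = Real.exp (a * x + a ^ 2 * t))
    (A : ℝ → ℝ)
    (hA : ∀ a, A a = sSup ((fun p : ℝ × ℝ => u a p.1 p.2) '' (Set.Icc 1 3 ×ˢ Set.Icc 1 2))) :
    (¬ ∃ C : ℝ, ∀ a : ℝ, 0 < a →
      deriv (deriv (fun y => u a y 2)) 2 / u a 2 2
        ≤ C * (1 + Real.log (A a / u a 2 2))) ∧
    (∀ a : ℝ, 0 < a →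
      (deriv (deriv (fun y => u a y 2)) 2 / u a 2 2) / (1 + Real.log (A a / u a 2 2))
        = a ^ 2 / (1 + a)) ∧
    Tendsto (fun a : ℝ => a ^ 2 / (1 + a)) atTop atTop := by
  refine ⟨?_, ?_, ?_⟩
  · rintro ⟨C, hC⟩
    set a := |C| + 2 with hadef
    have ha : 0 < a := by positivity
    obtain ⟨h1, h2⟩ := aux_ratio a ha u hu A hA
    have := hC a ha
    rw [h1, h2] at this
    have hC' : C ≤ |C| := le_abs_self C
    nlinarith [abs_nonneg C]
  · intro a ha
    obtain ⟨h1, h2⟩ := aux_ratio a ha u hu A hA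
    rw [h1, h2]
  · apply tendsto_atTop_mono' _ (_ : ∀ᶠ a : ℝ in atTop, a - 1 ≤ a ^ 2 / (1 + a))
      (tendsto_atTop_add_const_right _ (-1) tendsto_id)
    filter_upwards [eventually_ge_atTop (0:ℝ)] with a ha
    rw [le_div_iff₀ (by linarith)]
    nlinarith
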